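/- Let a₁, a₂ be positive reals and b₁ = a₁ + a₂ + 1 (so s = 1, p = 1). Then as m → ∞: ∑_{l=0}^{m-1} Γ(a₁+l)Γ(a₂+l)/(Γ(a₁+a₂+1+l)Γ(1+l)) = 1/(a₁a₂) − 1/(m−1) + (1/2)·(a₁+1)(a₂+1)/((m−1)(m−2)) + O(m^{−3}). -/

import Mathlib

open Real Filter Asymptotics Topology

namespace SEqOneAux

/-- The Gamma ratio `Γ(a+m)Γ(b+m)/(Γ(a+b+m)Γ(m))`. -/
noncomputable def Q (a b : ℝ) (m : ℕ) : ℝ :=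
  Gamma (a + m) * Gamma (b + m) / (Gamma (a + b + m) * Gamma m)

/-- The rational approximation. -/
noncomputable def qq (a b : ℝ) (m : ℕ) : ℝ :=
  1 - a * b / ((m : ℝ) - 1) + (a * b * (a + 1) * (b + 1) / 2) / (((m : ℝ) - 1) * ((m : ℝ) - 2))

noncomputable def uu (a b : ℝ) (m : ℕ) : ℝ := qq a b m / Q a b m

noncomputable def KK (a b : ℝ) : ℝ := a * b * (a + 1) * (b + 1) * (a + 2) * (b + 2) / 2

noncomputable def Wf (a b : ℝ) (m : ℕ) : ℝ :=
  (a + b + m) * m * ((m : ℝ) - 1) * ((m : ℝ) - 2)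

noncomputable def vv (m : ℕ) : ℝ := 1 / (((m : ℝ) - 2) * ((m : ℝ) - 1) * m)

lemma telescope (f : ℕ → ℝ) {m n : ℕ} (h : m ≤ n) :
    ∑ k ∈ Finset.Ico m n, (f k - f (k + 1)) = f m - f n := by
  induction n, h using Nat.le_induction with
  | base => simp
  | succ n hn ih => rw [Finset.sum_Ico_succ_top hn, ih]; ring

lemma gamma_prod {s : ℝ} (hs : 0 < s) (n : ℕ) :
    Gamma (s + n + 1) = (∏ j ∈ Finset.range (n + 1), (s + j)) * Gamma s := by
  induction n with
  | zero => simp [Real.Gamma_add_one hs.ne']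
  | succ n ih =>
    have h1 : s + (n + 1 : ℕ) + 1 = (s + n + 1) + 1 := by push_cast; ring
    have h2 : (0:ℝ) < s + n + 1 := by positivity
    have e : (((n:ℕ) + 1 : ℕ) : ℝ) = (n : ℝ) + 1 := by push_cast; ring
    rw [h1, Real.Gamma_add_one h2.ne', ih]
    conv_rhs => rw [Finset.prod_range_succ]
    rw [e]
    ring

lemma ratio_tendsto {s : ℝ} (hs : 0 < s) :
    Tendsto (fun n : ℕ => (n : ℝ) ^ s * Gamma ((n : ℝ) + 1) / Gamma (s + n + 1))
      atTop (𝓝 1) := by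
  have h := Real.GammaSeq_tendsto_Gamma s
  have hne : Gamma s ≠ 0 := (Real.Gamma_pos_of_pos hs).ne'
  have heq : ∀ n : ℕ,
      (n : ℝ) ^ s * Gamma ((n : ℝ) + 1) / Gamma (s + n + 1) = Real.GammaSeq s n / Gamma s := by
    intro n
    have hprod : (0:ℝ) < ∏ j ∈ Finset.range (n + 1), (s + j) :=
      Finset.prod_pos fun j _ => by positivity
    rw [Real.GammaSeq, gamma_prod hs n, Real.Gamma_nat_eq_factorial]
    field_simp
  have h2 : Tendsto (fun n => Real.GammaSeq s n / Gamma s) atTop (𝓝 (Gamma s / Gamma s)) :=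
    h.div_const _
  rw [div_self hne] at h2
  exact h2.congr fun n => (heq n).symm

lemma Q_pos {a b : ℝ} (ha : 0 < a) (hb : 0 < b) {m : ℕ} (hm : 1 ≤ m) : 0 < Q a b m := by
  have hm' : (0:ℝ) < m := by exact_mod_cast hm
  have h1 : 0 < Gamma (a + m) := Real.Gamma_pos_of_pos (by positivity)
  have h2 : 0 < Gamma (b + m) := Real.Gamma_pos_of_pos (by positivity)
  have h3 : 0 < Gamma (a + b + m) := Real.Gamma_pos_of_pos (by positivity)
  have h4 : 0 < Gamma (m : ℝ) := Real.Gamma_pos_of_pos hm'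
  exact div_pos (mul_pos h1 h2) (mul_pos h3 h4)

lemma Q_succ {a b : ℝ} (ha : 0 < a) (hb : 0 < b) {k : ℕ} (hk : 1 ≤ k) :
    Q a b (k + 1) = Q a b k * ((a + k) * (b + k) / ((a + b + k) * k)) := by
  have hk' : (0:ℝ) < k := by exact_mod_cast hk
  have e1 : a + ((k : ℕ) + 1 : ℕ) = (a + k) + 1 := by push_cast; ring
  have e2 : b + ((k : ℕ) + 1 : ℕ) = (b + k) + 1 := by push_cast; ring
  have e3 : a + b + ((k : ℕ) + 1 : ℕ) = (a + b + k) + 1 := by push_cast; ring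
  have e4 : (((k : ℕ) + 1 : ℕ) : ℝ) = (k : ℝ) + 1 := by push_cast; ring
  have h1 : (0:ℝ) < a + k := by positivity
  have h2 : (0:ℝ) < b + k := by positivity
  have h3 : (0:ℝ) < a + b + k := by positivity
  have hG3 : Gamma (a + b + k) ≠ 0 := (Real.Gamma_pos_of_pos h3).ne'
  have hG4 : Gamma (k : ℝ) ≠ 0 := (Real.Gamma_pos_of_pos hk').ne'
  rw [Q, Q, e1, e2, e3, e4, Real.Gamma_add_one h1.ne', Real.Gamma_add_one h2.ne',
    Real.Gamma_add_one h3.ne', Real.Gamma_add_one hk'.ne']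
  field_simp

lemma closed_form {a b : ℝ} (ha : 0 < a) (hb : 0 < b) (m : ℕ) :
    (∑ l ∈ Finset.range m,
        Gamma (a + l) * Gamma (b + l) / (Gamma (a + b + 1 + l) * Gamma (1 + l)))
      = Q a b m / (a * b) := by
  induction m with
  | zero => simp [Q, Real.Gamma_zero]
  | succ m ih =>
    rw [Finset.sum_range_succ, ih]
    rcases Nat.eq_zero_or_pos m with hm | hm
    · subst hm
      have hab : (0:ℝ) < a + b := by positivity
      have e1 : a + ((0:ℕ) + 1 : ℕ) = a + 1 := by push_cast; ring
      simp only [Q, Nat.cast_zero, Nat.cast_one, add_zero, Nat.zero_add]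
      rw [Real.Gamma_zero, Real.Gamma_one, Real.Gamma_add_one ha.ne',
        Real.Gamma_add_one hb.ne']
      have hG : Gamma (a + b + 1) ≠ 0 :=
        (Real.Gamma_pos_of_pos (by positivity : (0:ℝ) < a + b + 1)).ne'
      field_simp
      ring
    · have hm' : (0:ℝ) < m := by exact_mod_cast hm
      rw [Q_succ ha hb hm]
      have e5 : a + b + 1 + (m : ℝ) = (a + b + m) + 1 := by ring
      have e6 : (1 : ℝ) + (m : ℝ) = (m : ℝ) + 1 := by ring
      have h3 : (0:ℝ) < a + b + m := by positivity
      rw [e5, e6, Real.Gamma_add_one h3.ne', Real.Gamma_add_one hm'.ne']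
      have hQ := Q_pos ha hb hm
      have hG1 : (0:ℝ) < Gamma (a + m) := Real.Gamma_pos_of_pos (by positivity)
      have hG2 : (0:ℝ) < Gamma (b + m) := Real.Gamma_pos_of_pos (by positivity)
      have hG3 : (0:ℝ) < Gamma (a + b + m) := Real.Gamma_pos_of_pos h3
      have hG4 : (0:ℝ) < Gamma (m : ℝ) := Real.Gamma_pos_of_pos hm'
      rw [Q]
      field_simp
      ring

lemma step_identity {a b : ℝ} (ha : 0 < a) (hb : 0 < b) {k : ℕ} (hk : 3 ≤ k) :
    uu a b k - uu a b (k + 1) = KK a b / (Wf a b k * Q a b (k + 1)) := by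
  have hk' : (3:ℝ) ≤ (k : ℝ) := by exact_mod_cast hk
  have hk1 : 1 ≤ k := le_trans (by norm_num) hk
  have hQk := Q_pos ha hb hk1
  have hQk1 := Q_pos ha hb (le_trans hk1 (Nat.le_succ k))
  have hWf : (0:ℝ) < Wf a b k := by
    rw [Wf]
    have h0 : (0:ℝ) < a + b + k := by positivity
    have h1 : (0:ℝ) < (k:ℝ) := by linarith
    have h2 : (0:ℝ) < (k:ℝ) - 1 := by linarith
    have h3 : (0:ℝ) < (k:ℝ) - 2 := by linarith
    exact mul_pos (mul_pos (mul_pos h0 h1) h2) h3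
  -- the key rational identity
  have hrat : qq a b k * ((a + k) * (b + k) / ((a + b + k) * k)) - qq a b (k + 1)
      = KK a b / Wf a b k := by
    rw [qq, qq, KK, Wf]
    have e4 : (((k : ℕ) + 1 : ℕ) : ℝ) = (k : ℝ) + 1 := by push_cast; ring
    rw [e4]
    have h1 : ((k:ℝ) - 1) ≠ 0 := by linarith
    have h2 : ((k:ℝ) - 2) ≠ 0 := by linarith
    have h3 : (k:ℝ) ≠ 0 := by linarith
    have h4 : ((k:ℝ) + 1 - 1) = (k:ℝ) := by ring
    have h5 : ((k:ℝ) + 1 - 2) = (k:ℝ) - 1 := by ring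
    have h6 : (a + b + (k:ℝ)) ≠ 0 := by positivity
    rw [h4, h5]
    field_simp
    ring
  have hrat' : (qq a b k * ((a + k) * (b + k) / ((a + b + k) * k)) - qq a b (k + 1))
      * Wf a b k = KK a b := by
    rw [hrat, div_mul_cancel₀ _ hWf.ne']
  have hQs := Q_succ ha hb hk1
  have hsuf : (qq a b k * Q a b (k + 1) - qq a b (k + 1) * Q a b k) * Wf a b k
      = KK a b * Q a b k := by
    rw [hQs]
    linear_combination Q a b k * hrat'
  rw [uu, uu, div_sub_div _ _ hQk.ne' hQk1.ne',
    div_eq_div_iff (mul_pos hQk hQk1).ne' (mul_pos hWf hQk1).ne']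
  linear_combination Q a b (k + 1) * hsuf

lemma qq_tendsto (a b : ℝ) : Tendsto (qq a b) atTop (𝓝 1) := by
  have h1 : Tendsto (fun m : ℕ => (m : ℝ) - 1) atTop atTop :=
    tendsto_atTop_add_const_right _ _ tendsto_natCast_atTop_atTop
  have h2 : Tendsto (fun m : ℕ => (m : ℝ) - 2) atTop atTop :=
    tendsto_atTop_add_const_right _ _ tendsto_natCast_atTop_atTop
  have A : Tendsto (fun m : ℕ => a * b / ((m : ℝ) - 1)) atTop (𝓝 0) :=
    Tendsto.div_atTop tendsto_const_nhds h1
  have B : Tendsto (fun m : ℕ =>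
      (a * b * (a + 1) * (b + 1) / 2) / (((m : ℝ) - 1) * ((m : ℝ) - 2))) atTop (𝓝 0) :=
    Tendsto.div_atTop tendsto_const_nhds (h1.atTop_mul_atTop₀ h2)
  have := (tendsto_const_nhds (x := (1:ℝ)) (f := atTop)).sub A |>.add B
  simp only [sub_zero, add_zero] at this
  exact this

lemma Q_tendsto {a b : ℝ} (ha : 0 < a) (hb : 0 < b) : Tendsto (Q a b) atTop (𝓝 1) := by
  have hA := ratio_tendsto ha
  have hB := ratio_tendsto hb
  have hC := ratio_tendsto (show (0:ℝ) < a + b by positivity)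
  rw [← tendsto_add_atTop_iff_nat 1]
  have key := hC.div (hA.mul hB) (by norm_num)
  rw [show (1:ℝ) / (1 * 1) = 1 by norm_num] at key
  refine key.congr' ?_
  filter_upwards [eventually_ge_atTop 1] with n hn
  have hn0 : (0:ℝ) < n := by exact_mod_cast hn
  have e1 : a + ((n : ℕ) + 1 : ℕ) = a + n + 1 := by push_cast; ring
  have e2 : b + ((n : ℕ) + 1 : ℕ) = b + n + 1 := by push_cast; ring
  have e3 : a + b + ((n : ℕ) + 1 : ℕ) = a + b + n + 1 := by push_cast; ring
  have e4 : (((n : ℕ) + 1 : ℕ) : ℝ) = (n : ℝ) + 1 := by push_cast; ring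
  have hG1 : (0:ℝ) < Gamma (a + n + 1) := Real.Gamma_pos_of_pos (by positivity)
  have hG2 : (0:ℝ) < Gamma (b + n + 1) := Real.Gamma_pos_of_pos (by positivity)
  have hG3 : (0:ℝ) < Gamma (a + b + n + 1) := Real.Gamma_pos_of_pos (by positivity)
  have hG4 : (0:ℝ) < Gamma ((n:ℝ) + 1) := Real.Gamma_pos_of_pos (by positivity)
  have hra : (0:ℝ) < (n:ℝ) ^ a := Real.rpow_pos_of_pos hn0 a
  have hrb : (0:ℝ) < (n:ℝ) ^ b := Real.rpow_pos_of_pos hn0 b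
  simp only [Pi.div_apply, Pi.mul_apply]
  rw [Q, e1, e2, e3, e4, Real.rpow_add hn0]
  field_simp

end SEqOneAux

open SEqOneAux

set_option maxHeartbeats 1600000 in
theorem s_eq_one_partial_sums (a₁ a₂ : ℝ) (ha₁ : 0 < a₁) (ha₂ : 0 < a₂) :
    (fun m : ℕ =>
        (∑ l ∈ Finset.range m,
          Gamma (a₁ + l) * Gamma (a₂ + l) / (Gamma (a₁ + a₂ + 1 + l) * Gamma (1 + l)))
        - (1 / (a₁ * a₂) - 1 / ((m : ℝ) - 1)
            + (1 / 2) * ((a₁ + 1) * (a₂ + 1)) / (((m : ℝ) - 1) * ((m : ℝ) - 2))))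
      =O[atTop] fun m : ℕ => (m : ℝ) ^ (-3 : ℝ) := by
  set a := a₁
  set b := a₂
  have hab : (0:ℝ) < a * b := mul_pos ha₁ ha₂
  have hKK : (0:ℝ) < KK a b := by rw [KK]; positivity
  have hQt : Tendsto (Q a b) atTop (𝓝 1) := Q_tendsto ha₁ ha₂
  have hqt : Tendsto (qq a b) atTop (𝓝 1) := qq_tendsto a b
  have hu : Tendsto (uu a b) atTop (𝓝 1) := by
    have h := hqt.div hQt one_ne_zero
    rw [one_div_one] at h
    exact h
  obtain ⟨M₀, hM₀⟩ := eventually_atTop.1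
    ((hQt.eventually (eventually_gt_nhds (show (1:ℝ)/2 < 1 by norm_num))).and
      (hQt.eventually (eventually_lt_nhds (show (1:ℝ) < 2 by norm_num))))
  set M := max M₀ 3 with hM
  have hM3 : 3 ≤ M := le_max_right _ _
  have hMM₀ : M₀ ≤ M := le_max_left _ _
  -- termwise bounds
  have hstep : ∀ k, M ≤ k →
      0 ≤ uu a b k - uu a b (k + 1) ∧
      uu a b k - uu a b (k + 1) ≤ (4 * KK a b / 3) * (vv k - vv (k + 1)) := by
    intro k hk
    have hk3 : 3 ≤ k := le_trans hM3 hk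
    have hk' : (3:ℝ) ≤ (k : ℝ) := by exact_mod_cast hk3
    have hQk1 := Q_pos ha₁ ha₂ (show 1 ≤ k + 1 by omega)
    have hQhalf : (1:ℝ)/2 < Q a b (k + 1) := (hM₀ (k+1) (by omega)).1
    have hWf : (0:ℝ) < Wf a b k := by
      rw [Wf]
      have h0 : (0:ℝ) < a + b + (k:ℝ) := by positivity
      have h1 : (0:ℝ) < (k:ℝ) := by linarith
      have h2 : (0:ℝ) < (k:ℝ) - 1 := by linarith
      have h3 : (0:ℝ) < (k:ℝ) - 2 := by linarith
      exact mul_pos (mul_pos (mul_pos h0 h1) h2) h3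
    rw [step_identity ha₁ ha₂ hk3]
    constructor
    · positivity
    · have hD : (0:ℝ) < ((k:ℝ) - 2) * ((k:ℝ) - 1) * k * ((k:ℝ) + 1) := by
        have h1 : (0:ℝ) < (k:ℝ) - 2 := by linarith
        have h2 : (0:ℝ) < (k:ℝ) - 1 := by linarith
        have h3 : (0:ℝ) < (k:ℝ) := by linarith
        have h4 : (0:ℝ) < (k:ℝ) + 1 := by linarith
        exact mul_pos (mul_pos (mul_pos h1 h2) h3) h4
      have hv : vv k - vv (k + 1) = 3 / (((k:ℝ) - 2) * ((k:ℝ) - 1) * k * ((k:ℝ) + 1)) := by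
        rw [vv, vv]
        have e4 : (((k : ℕ) + 1 : ℕ) : ℝ) = (k : ℝ) + 1 := by push_cast; ring
        rw [e4]
        have h4 : ((k:ℝ) + 1 - 2) = (k:ℝ) - 1 := by ring
        have h5 : ((k:ℝ) + 1 - 1) = (k:ℝ) := by ring
        rw [h4, h5]
        have h1 : ((k:ℝ) - 1) ≠ 0 := by linarith
        have h2 : ((k:ℝ) - 2) ≠ 0 := by linarith
        have h3 : (k:ℝ) ≠ 0 := by linarith
        have h6 : ((k:ℝ) + 1) ≠ 0 := by linarith
        field_simp
        ring
      rw [hv]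
      have hgoal : (4 * KK a b / 3) * (3 / (((k:ℝ) - 2) * ((k:ℝ) - 1) * k * ((k:ℝ) + 1)))
          = 4 * KK a b / (((k:ℝ) - 2) * ((k:ℝ) - 1) * k * ((k:ℝ) + 1)) := by
        field_simp
      rw [hgoal, div_le_div_iff₀ (by positivity) hD]
      -- KK * D ≤ 4 KK * (Wf * Q)
      have hWfD : ((k:ℝ) - 2) * ((k:ℝ) - 1) * k * ((k:ℝ) + 1) ≤ 2 * Wf a b k := by
        rw [Wf]
        have hfac : (0:ℝ) ≤ ((k:ℝ) - 2) * ((k:ℝ) - 1) * k := by nlinarith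
        have hlin : (0:ℝ) ≤ 2 * (a + b + k) - ((k:ℝ) + 1) := by nlinarith
        nlinarith [mul_nonneg hfac hlin]
      have hQW : 2 * Wf a b k ≤ 4 * (Wf a b k * Q a b (k + 1)) := by
        nlinarith [mul_nonneg hWf.le (show (0:ℝ) ≤ 2 * Q a b (k+1) - 1 by linarith)]
      nlinarith [mul_le_mul_of_nonneg_left (le_trans hWfD hQW) hKK.le]
    -- end hstep
  have key : ∀ m, M ≤ m → |uu a b m - 1| ≤ (4 * KK a b / 3) * vv m := by
    intro m hm
    have hm3 : 3 ≤ m := le_trans hM3 hm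
    have hbound : ∀ n, m ≤ n → |uu a b m - uu a b n| ≤ (4 * KK a b / 3) * vv m := by
      intro n hn
      have htel : ∑ k ∈ Finset.Ico m n, (uu a b k - uu a b (k + 1)) = uu a b m - uu a b n :=
        telescope _ hn
      have h0 : 0 ≤ uu a b m - uu a b n := by
        rw [← htel]
        exact Finset.sum_nonneg fun k hk =>
          (hstep k (le_trans hm (Finset.mem_Ico.1 hk).1)).1
      have h1 : uu a b m - uu a b n
          ≤ ∑ k ∈ Finset.Ico m n, (4 * KK a b / 3) * (vv k - vv (k + 1)) := by
        rw [← htel]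
        exact Finset.sum_le_sum fun k hk =>
          (hstep k (le_trans hm (Finset.mem_Ico.1 hk).1)).2
      have h2 : ∑ k ∈ Finset.Ico m n, (4 * KK a b / 3) * (vv k - vv (k + 1))
          = (4 * KK a b / 3) * (vv m - vv n) := by
        rw [← Finset.mul_sum, telescope _ hn]
      have hvn : 0 ≤ vv n := by
        rw [vv]
        have hn3 : (3:ℝ) ≤ (n:ℝ) := by exact_mod_cast le_trans hm3 hn
        have h1 : (0:ℝ) < (n:ℝ) - 2 := by linarith
        have h2 : (0:ℝ) < (n:ℝ) - 1 := by linarith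
        have h3 : (0:ℝ) < (n:ℝ) := by linarith
        positivity
      rw [abs_of_nonneg h0]
      calc uu a b m - uu a b n ≤ (4 * KK a b / 3) * (vv m - vv n) := h1.trans h2.le
        _ ≤ (4 * KK a b / 3) * vv m := by nlinarith
    have hlim : Tendsto (fun n => |uu a b m - uu a b n|) atTop (𝓝 |uu a b m - 1|) :=
      (tendsto_const_nhds.sub hu).abs
    exact le_of_tendsto hlim (eventually_atTop.2 ⟨m, hbound⟩)
  -- final assembly
  rw [isBigO_iff]
  refine ⟨72 * KK a b / (a * b), ?_⟩
  filter_upwards [eventually_ge_atTop M] with m hm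
  have hm3 : 3 ≤ m := le_trans hM3 hm
  have hm' : (3:ℝ) ≤ (m:ℝ) := by exact_mod_cast hm3
  have hm0 : (0:ℝ) < (m:ℝ) := by linarith
  have hQm := Q_pos ha₁ ha₂ (le_trans (by norm_num) hm3)
  have hQ2 : Q a b m < 2 := (hM₀ m (le_trans hMM₀ hm)).2
  have hfm : 1 / (a * b) - 1 / ((m : ℝ) - 1)
      + (1 / 2) * ((a + 1) * (b + 1)) / (((m : ℝ) - 1) * ((m : ℝ) - 2))
      = qq a b m / (a * b) := by
    rw [qq]
    have h1 : ((m:ℝ) - 1) ≠ 0 := by linarith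
    have h2 : ((m:ℝ) - 2) ≠ 0 := by linarith
    field_simp
  rw [closed_form ha₁ ha₂ m, hfm, div_sub_div_same, Real.norm_eq_abs, abs_div,
    abs_of_pos hab]
  have hQu : Q a b m - qq a b m = Q a b m * (1 - uu a b m) := by
    rw [uu, mul_sub, mul_one, ← mul_div_assoc, mul_div_cancel_left₀ _ hQm.ne']
  have habs : |Q a b m - qq a b m| ≤ 2 * ((4 * KK a b / 3) * vv m) := by
    rw [hQu, abs_mul, abs_of_pos hQm]
    calc Q a b m * |1 - uu a b m|
        ≤ 2 * |1 - uu a b m| := mul_le_mul_of_nonneg_right hQ2.le (abs_nonneg _)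
      _ = 2 * |uu a b m - 1| := by rw [abs_sub_comm]
      _ ≤ 2 * ((4 * KK a b / 3) * vv m) := by
          have := key m hm; linarith
  have hvm27 : vv m ≤ 27 / (m:ℝ)^3 := by
    have h1 : (0:ℝ) < (m:ℝ) - 2 := by linarith
    have h2 : (0:ℝ) < (m:ℝ) - 1 := by linarith
    have hden : (m:ℝ)^3 / 27 ≤ ((m:ℝ) - 2) * ((m:ℝ) - 1) * m := by
      nlinarith [mul_nonneg hm0.le (sq_nonneg ((m:ℝ) - 3)),
        mul_nonneg hm0.le (show (0:ℝ) ≤ 5 * (m:ℝ) - 12 by linarith)]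
    rw [vv]
    calc 1 / (((m:ℝ) - 2) * ((m:ℝ) - 1) * m)
        ≤ 1 / ((m:ℝ)^3 / 27) :=
          one_div_le_one_div_of_le (div_pos (pow_pos hm0 3) (by norm_num)) hden
      _ = 27 / (m:ℝ)^3 := by rw [one_div_div]
  have hnorm : ‖(m : ℝ) ^ (-3 : ℝ)‖ = ((m:ℝ)^3)⁻¹ := by
    rw [Real.norm_eq_abs, abs_of_pos (Real.rpow_pos_of_pos hm0 _),
      show (-3 : ℝ) = -((3:ℕ):ℝ) by norm_num, Real.rpow_neg hm0.le, Real.rpow_natCast]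
  rw [hnorm]
  have hchain : |Q a b m - qq a b m| ≤ 2 * ((4 * KK a b / 3) * (27 / (m:ℝ)^3)) := by
    have := mul_le_mul_of_nonneg_left hvm27 (by positivity : (0:ℝ) ≤ 4 * KK a b / 3)
    nlinarith
  calc |Q a b m - qq a b m| / (a * b)
      ≤ (2 * ((4 * KK a b / 3) * (27 / (m:ℝ)^3))) / (a * b) := by
        exact (div_le_div_iff_of_pos_right hab).mpr hchain
    _ = 72 * KK a b / (a * b) * ((m:ℝ)^3)⁻¹ := by
        field_simp
        ring
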